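/- Let A, B, C > 0 and 2 < σ < τ be real numbers, and define h(t) = (A/2)t² − B t^σ + C t^τ for t > 0. If there exists t₀ > 0 with h(t₀) < 0, then there exist 0 < t₁ < t₂ such that h(t₁) = h(t₂) = 0, h(t) > 0 for t ∈ (0, t₁) ∪ (t₂, ∞), and h(t) < 0 for t ∈ (t₁, t₂). -/
import Mathlib


open Real Set

private lemma factor_aux (A B C σ τ t : ℝ) (ht : 0 < t) :
    (A / 2) * t ^ 2 - B * t ^ σ + C * t ^ τ
      = t ^ 2 * (A / 2 - B * t ^ (σ - 2) + C * t ^ (τ - 2)) := by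
  have h2 : t ^ (2:ℝ) = t ^ (2:ℕ) := by
    rw [← Real.rpow_natCast t 2]; norm_num
  have hs : t ^ σ = t ^ (σ - 2) * t ^ (2:ℕ) := by
    rw [← h2, ← Real.rpow_add ht]; ring_nf
  have hτ : t ^ τ = t ^ (τ - 2) * t ^ (2:ℕ) := by
    rw [← h2, ← Real.rpow_add ht]; ring_nf
  rw [hs, hτ]; ring

theorem stmt_3 (A B C σ τ : ℝ) (hA : 0 < A) (hB : 0 < B) (hC : 0 < C)
    (hσ : 2 < σ) (hστ : σ < τ)
    (h : ∃ t₀ : ℝ, 0 < t₀ ∧ (A / 2) * t₀ ^ 2 - B * t₀ ^ σ + C * t₀ ^ τ < 0) :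
    ∃ t₁ t₂ : ℝ, 0 < t₁ ∧ t₁ < t₂ ∧
      (A / 2) * t₁ ^ 2 - B * t₁ ^ σ + C * t₁ ^ τ = 0 ∧
      (A / 2) * t₂ ^ 2 - B * t₂ ^ σ + C * t₂ ^ τ = 0 ∧
      (∀ t : ℝ, 0 < t → t < t₁ → 0 < (A / 2) * t ^ 2 - B * t ^ σ + C * t ^ τ) ∧
      (∀ t : ℝ, t₂ < t → 0 < (A / 2) * t ^ 2 - B * t ^ σ + C * t ^ τ) ∧
      (∀ t : ℝ, t₁ < t → t < t₂ → (A / 2) * t ^ 2 - B * t ^ σ + C * t ^ τ < 0) := by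
  obtain ⟨t₀, ht₀, hft₀⟩ := h
  set p := σ - 2 with hp_def
  set q := τ - 2 with hq_def
  have hp : 0 < p := by simp [hp_def]; linarith
  have hq : 0 < q := by simp [hq_def]; linarith
  have hpq : p < q := by simp [hp_def, hq_def]; linarith
  set g : ℝ → ℝ := fun t => A / 2 - B * t ^ p + C * t ^ q with hg_def
  -- factorization
  have hfac : ∀ t : ℝ, 0 < t →
      (A / 2) * t ^ 2 - B * t ^ σ + C * t ^ τ = t ^ 2 * g t := by
    intro t ht
    exact factor_aux A B C σ τ t ht
  have hsq : ∀ t : ℝ, 0 < t → (0:ℝ) < t ^ 2 := fun t ht => by positivity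
  -- sign equivalences
  have hpos_iff : ∀ t : ℝ, 0 < t → (0 < (A / 2) * t ^ 2 - B * t ^ σ + C * t ^ τ ↔ 0 < g t) := by
    intro t ht; rw [hfac t ht]
    constructor
    · intro h1; nlinarith [hsq t ht]
    · intro h1; exact mul_pos (hsq t ht) h1
  have hneg_iff : ∀ t : ℝ, 0 < t → ((A / 2) * t ^ 2 - B * t ^ σ + C * t ^ τ < 0 ↔ g t < 0) := by
    intro t ht; rw [hfac t ht]
    constructor
    · intro h1; nlinarith [hsq t ht]
    · intro h1; exact mul_neg_of_pos_of_neg (hsq t ht) h1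
  have hzero_iff : ∀ t : ℝ, 0 < t → ((A / 2) * t ^ 2 - B * t ^ σ + C * t ^ τ = 0 ↔ g t = 0) := by
    intro t ht; rw [hfac t ht]
    constructor
    · intro h1
      rcases mul_eq_zero.1 h1 with h2 | h2
      · exact absurd h2 (ne_of_gt (hsq t ht))
      · exact h2
    · intro h1; rw [h1, mul_zero]
  have hgt₀ : g t₀ < 0 := (hneg_iff t₀ ht₀).1 hft₀
  -- critical point
  set m : ℝ := (B * p / (C * q)) ^ (1 / (q - p)) with hm_def
  have hbase : 0 < B * p / (C * q) := by positivity
  have hm : 0 < m := Real.rpow_pos_of_pos hbase _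
  have hqp : 0 < q - p := by linarith
  have hm_pow : m ^ (q - p) = B * p / (C * q) := by
    rw [hm_def, ← Real.rpow_mul hbase.le, one_div,
      inv_mul_cancel₀ (ne_of_gt hqp), Real.rpow_one]
  -- derivative of g
  have hderiv : ∀ t : ℝ, 0 < t →
      HasDerivAt g (-(B * (p * t ^ (p - 1))) + C * (q * t ^ (q - 1))) t := by
    intro t ht
    have h1 : HasDerivAt (fun x : ℝ => x ^ p) (p * t ^ (p - 1)) t :=
      Real.hasDerivAt_rpow_const (Or.inl (ne_of_gt ht))
    have h2 : HasDerivAt (fun x : ℝ => x ^ q) (q * t ^ (q - 1)) t :=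
      Real.hasDerivAt_rpow_const (Or.inl (ne_of_gt ht))
    have h3 := ((hasDerivAt_const t (A / 2)).sub (h1.const_mul B)).add (h2.const_mul C)
    have : (0 : ℝ) - B * (p * t ^ (p - 1)) + C * (q * t ^ (q - 1))
        = -(B * (p * t ^ (p - 1))) + C * (q * t ^ (q - 1)) := by ring
    rw [this] at h3
    exact h3
  have hcontAt : ∀ t : ℝ, 0 < t → ContinuousAt g t :=
    fun t ht => (hderiv t ht).continuousAt
  -- sign of derivative
  have hderiv_val : ∀ t : ℝ, 0 < t →
      deriv g t = -(B * (p * t ^ (p - 1))) + C * (q * t ^ (q - 1)) :=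
    fun t ht => (hderiv t ht).deriv
  have hsplit : ∀ t : ℝ, 0 < t → t ^ (q - 1) = t ^ (q - p) * t ^ (p - 1) := by
    intro t ht
    rw [← Real.rpow_add ht]; ring_nf
  have hderiv_neg : ∀ t ∈ Ioo (0:ℝ) m, deriv g t < 0 := by
    intro t ht
    rw [hderiv_val t ht.1, hsplit t ht.1]
    have h1 : t ^ (q - p) < m ^ (q - p) :=
      Real.rpow_lt_rpow ht.1.le ht.2 hqp
    rw [hm_pow] at h1
    have h2 : (0:ℝ) < t ^ (p - 1) := Real.rpow_pos_of_pos ht.1 _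
    rw [lt_div_iff₀ (by positivity : (0:ℝ) < C * q)] at h1
    nlinarith [mul_lt_mul_of_pos_right h1 h2]
  have hderiv_pos' : ∀ t ∈ Ioi (m:ℝ), 0 < deriv g t := by
    intro t ht
    have htpos : 0 < t := lt_trans hm ht
    rw [hderiv_val t htpos, hsplit t htpos]
    have h1 : m ^ (q - p) < t ^ (q - p) :=
      Real.rpow_lt_rpow hm.le ht hqp
    rw [hm_pow] at h1
    have h2 : (0:ℝ) < t ^ (p - 1) := Real.rpow_pos_of_pos htpos _
    rw [div_lt_iff₀ (by positivity : (0:ℝ) < C * q)] at h1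
    nlinarith [mul_lt_mul_of_pos_right h1 h2]
  -- monotonicity
  have hanti : StrictAntiOn g (Ioc 0 m) := by
    apply strictAntiOn_of_deriv_neg (convex_Ioc 0 m)
    · exact fun t ht => (hcontAt t ht.1).continuousWithinAt
    · rw [interior_Ioc]; exact hderiv_neg
  have hmono : StrictMonoOn g (Ici m) := by
    apply strictMonoOn_of_deriv_pos (convex_Ici m)
    · exact fun t ht => (hcontAt t (lt_of_lt_of_le hm ht)).continuousWithinAt
    · rw [interior_Ici]; exact hderiv_pos'
  -- g m < 0
  have hgm : g m < 0 := by
    rcases lt_trichotomy t₀ m with h1 | h1 | h1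
    · have := hanti ⟨ht₀, h1.le⟩ ⟨hm, le_refl m⟩ h1
      linarith
    · rw [← h1]; exact hgt₀
    · have := hmono (self_mem_Ici) (le_of_lt h1) h1
      linarith
  -- small point with g > 0
  set δ : ℝ := (A / (2 * B)) ^ (1 / p) with hδ_def
  have hδbase : (0:ℝ) < A / (2 * B) := by positivity
  have hδ : 0 < δ := Real.rpow_pos_of_pos hδbase _
  have hδpow : δ ^ p = A / (2 * B) := by
    rw [hδ_def, ← Real.rpow_mul hδbase.le, one_div,
      inv_mul_cancel₀ (ne_of_gt hp), Real.rpow_one]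
  set ε : ℝ := min (δ / 2) (m / 2) with hε_def
  have hε : 0 < ε := lt_min (by linarith) (by linarith)
  have hεδ : ε < δ := lt_of_le_of_lt (min_le_left _ _) (by linarith)
  have hεm : ε < m := lt_of_le_of_lt (min_le_right _ _) (by linarith)
  have hgε : 0 < g ε := by
    have h1 : ε ^ p < δ ^ p := Real.rpow_lt_rpow hε.le hεδ hp
    rw [hδpow] at h1
    have h2 : (0:ℝ) < ε ^ q := Real.rpow_pos_of_pos hε _
    have h3 : B * ε ^ p < A / 2 := by
      rw [div_mul_eq_div_div, lt_div_iff₀ hB] at h1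
      linarith
    simp only [hg_def]
    nlinarith [mul_pos hC h2]
  -- large point with g > 0
  set K : ℝ := (B / C) ^ (1 / (q - p)) with hK_def
  have hKbase : (0:ℝ) < B / C := by positivity
  have hK : 0 < K := Real.rpow_pos_of_pos hKbase _
  have hKpow : K ^ (q - p) = B / C := by
    rw [hK_def, ← Real.rpow_mul hKbase.le, one_div,
      inv_mul_cancel₀ (ne_of_gt hqp), Real.rpow_one]
  set M : ℝ := max (K + 1) (m + 1) with hM_def
  have hMm : m < M := lt_of_lt_of_le (by linarith) (le_max_right _ _)
  have hMK : K < M := lt_of_lt_of_le (by linarith) (le_max_left _ _)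
  have hMpos : 0 < M := lt_trans hm hMm
  have hgM : 0 < g M := by
    have h1 : K ^ (q - p) < M ^ (q - p) := Real.rpow_lt_rpow hK.le hMK hqp
    rw [hKpow] at h1
    have h2 : M ^ q = M ^ (q - p) * M ^ p := by
      rw [← Real.rpow_add hMpos]; ring_nf
    have h3 : (0:ℝ) < M ^ p := Real.rpow_pos_of_pos hMpos _
    have h4 : B * M ^ p < C * M ^ q := by
      rw [h2]
      have h5 : B / C < M ^ (q - p) := h1
      have h6 : B < C * M ^ (q - p) := by
        rw [div_lt_iff₀ hC] at h5; linarith [h5]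
      have h7 := mul_lt_mul_of_pos_right h6 h3
      rw [← mul_assoc]
      exact h7
    simp only [hg_def]
    linarith
  -- IVT for t₁
  obtain ⟨t₁, ht₁mem, hgt₁⟩ : ∃ t₁ ∈ Ioo ε m, g t₁ = 0 := by
    have hcont1 : ContinuousOn g (Icc ε m) :=
      fun t ht => (hcontAt t (lt_of_lt_of_le hε ht.1)).continuousWithinAt
    have := intermediate_value_Ioo' hεm.le hcont1 (⟨hgm, hgε⟩ : (0:ℝ) ∈ Ioo (g m) (g ε))
    obtain ⟨t₁, h1, h2⟩ := this
    exact ⟨t₁, h1, h2⟩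
  -- IVT for t₂
  obtain ⟨t₂, ht₂mem, hgt₂⟩ : ∃ t₂ ∈ Ioo m M, g t₂ = 0 := by
    have hcont2 : ContinuousOn g (Icc m M) :=
      fun t ht => (hcontAt t (lt_of_lt_of_le hm ht.1)).continuousWithinAt
    have := intermediate_value_Ioo hMm.le hcont2 (⟨hgm, hgM⟩ : (0:ℝ) ∈ Ioo (g m) (g M))
    obtain ⟨t₂, h1, h2⟩ := this
    exact ⟨t₂, h1, h2⟩
  have ht₁pos : 0 < t₁ := lt_trans hε ht₁mem.1
  have ht₁m : t₁ < m := ht₁mem.2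
  have hmt₂ : m < t₂ := ht₂mem.1
  refine ⟨t₁, t₂, ht₁pos, lt_trans ht₁m hmt₂, ?_, ?_, ?_, ?_, ?_⟩
  · exact (hzero_iff t₁ ht₁pos).2 hgt₁
  · exact (hzero_iff t₂ (lt_trans hm hmt₂)).2 hgt₂
  · intro t ht htl
    refine (hpos_iff t ht).2 ?_
    have := hanti ⟨ht, (lt_trans htl ht₁m).le⟩ ⟨ht₁pos, ht₁m.le⟩ htl
    rw [hgt₁] at this
    exact this
  · intro t htl
    refine (hpos_iff t (lt_trans (lt_trans hm hmt₂) htl)).2 ?_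
    have := hmono (le_of_lt hmt₂) (le_of_lt (lt_trans hmt₂ htl)) htl
    rw [hgt₂] at this
    exact this
  · intro t ht₁t htt₂
    have htpos : 0 < t := lt_trans ht₁pos ht₁t
    refine (hneg_iff t htpos).2 ?_
    rcases le_or_gt t m with hcase | hcase
    · have := hanti ⟨ht₁pos, ht₁m.le⟩ ⟨htpos, hcase⟩ ht₁t
      rw [hgt₁] at this
      exact this
    · have := hmono (le_of_lt hcase) (le_of_lt hmt₂) htt₂
      rw [hgt₂] at this
      exact this
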